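/- Let G = (V, E) be a finite simple graph and let λ ∈ ℝ be an eigenvalue of the Laplacian matrix of G, with multiplicity mult(λ) = dim_ℝ {x ∈ ℝ^V : Lx = λx}. Let W ⊆ V be an induced forest of G with no isolated vertices, with l leaves and c connected components. Then mult(λ) ≤ |V| − |W| + l − c. -/

import Mathlib

open SimpleGraph

namespace ForestBound

variable {WT : Type*} [DecidableEq WT] {F : SimpleGraph WT}

/-- Dichotomy: given a path `p : v → r` in an acyclic graph and a neighbor `u` of `v`,
either `p` starts by going to `u`, or appending the edge `u-v` in front of `p` is a path. -/
lemma dich (hF : F.IsAcyclic) {u v r : WT} (huv : F.Adj v u)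
    {p : F.Walk v r} (hp : p.IsPath) :
    (∃ q : F.Walk u r, p = Walk.cons huv q) ∨ (Walk.cons huv.symm p).IsPath := by
  by_cases hu : u ∈ p.support
  · left
    have hq : (p.dropUntil u hu).IsPath := hp.dropUntil hu
    have hsp : p.support = (p.takeUntil u hu).support ++ (p.dropUntil u hu).support.tail := by
      rw [← Walk.support_append, Walk.take_spec]
    have hv : v ∉ (p.dropUntil u hu).support := by
      intro hvs
      rw [Walk.support_eq_cons] at hvs
      rcases List.mem_cons.mp hvs with h1 | h2
      · exact huv.ne h1
      · have hnd := hp.support_nodup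
        rw [hsp, List.nodup_append] at hnd
        exact hnd.2.2 _ (Walk.start_mem_support _) _ h2 rfl
    have hcons : (Walk.cons huv (p.dropUntil u hu)).IsPath :=
      hq.cons hv
    have := hF.path_unique ⟨p, hp⟩ ⟨Walk.cons huv (p.dropUntil u hu), hcons⟩
    exact ⟨p.dropUntil u hu, congrArg Subtype.val this⟩
  · right
    rw [Walk.cons_isPath_iff]; exact ⟨hp, hu⟩

variable [Fintype WT] [DecidableRel F.Adj]

/-- If `v` is the root (`v = r`) or has degree at least 2, the path `p : v → r`
can be extended backwards by an edge to a path. -/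
lemma exists_extension (hF : F.IsAcyclic) {v r : WT} {p : F.Walk v r} (hp : p.IsPath)
    (hdeg : 0 < F.degree v) (hvr : v = r ∨ 2 ≤ F.degree v) :
    ∃ (u : WT) (huv : F.Adj v u), (Walk.cons huv.symm p).IsPath := by
  rcases hvr with rfl | h2
  · -- `p` is a path from `r` to `r`, hence nil
    have hnil : p = Walk.nil := by
      have := SimpleGraph.Path.loop_eq (⟨p, hp⟩ : F.Path v v)
      exact congrArg Subtype.val this
    obtain ⟨u, hu⟩ := Finset.card_pos.mp hdeg
    have huv : F.Adj v u := (SimpleGraph.mem_neighborFinset _ _ _).mp hu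
    rcases dich hF huv hp with ⟨q, hq⟩ | hgood
    · exfalso
      have := congrArg Walk.length hq
      rw [hnil] at this
      simp at this
    · exact ⟨u, huv, hgood⟩
  · obtain ⟨u, hu, hne⟩ := Finset.exists_mem_ne (show 1 < (F.neighborFinset v).card from h2) (p.getVert 1)
    have huv : F.Adj v u := (SimpleGraph.mem_neighborFinset _ _ _).mp hu
    rcases dich hF huv hp with ⟨q, hq⟩ | hgood
    · exfalso
      apply hne
      rw [hq, Walk.getVert_cons_succ, Walk.getVert_zero]
    · exact ⟨u, huv, hgood⟩

/-- Every connected component of a finite acyclic graph with minimum degree at least 1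
contains a vertex of degree 1. -/
lemma exists_leaf (hF : F.IsAcyclic) (hdeg : ∀ v, 0 < F.degree v) (v₀ : WT) :
    ∃ u, F.Reachable v₀ u ∧ F.degree u = 1 := by
  have Z : ∀ N : ℕ, ∀ v : WT, ∀ p : F.Walk v v₀, p.IsPath →
      Fintype.card WT - p.length ≤ N → ∃ u, F.Reachable v₀ u ∧ F.degree u = 1 := by
    intro N
    induction N with
    | zero =>
      intro v p hp hle
      exact absurd hp.length_lt (by omega)
    | succ N ih =>
      intro v p hp hle
      by_cases h1 : F.degree v = 1
      · exact ⟨v, ⟨p.reverse⟩, h1⟩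
      · have hvr : v = v₀ ∨ 2 ≤ F.degree v := by
          by_cases hv : v = v₀
          · exact Or.inl hv
          · right; have := hdeg v; omega
        obtain ⟨u, huv, hgood⟩ := exists_extension hF hp (hdeg v) hvr
        exact ih u (Walk.cons huv.symm p) hgood (by simp [Walk.length_cons]; omega)
  exact Z (Fintype.card WT) v₀ Walk.nil (by simp) (by omega)

/-- Key lemma: a function satisfying the eigen-relation on an acyclic graph which vanishes
on every leaf of a component except possibly a chosen root `r` vanishes on the whole
component. -/
lemma key (hF : F.IsAcyclic) (x ψ : WT → ℝ)
    (hrel : ∀ v, ∑ w ∈ F.neighborFinset v, x w = ψ v * x v)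
    (hdeg : ∀ v, 0 < F.degree v)
    (r : WT)
    (hleaf : ∀ v, F.Reachable v r → v ≠ r → F.degree v = 1 → x v = 0) :
    ∀ v, F.Reachable v r → x v = 0 := by
  have Z : ∀ N : ℕ, ∀ v : WT, ∀ p : F.Walk v r, p.IsPath →
      Fintype.card WT - p.length ≤ N → x v = 0 := by
    intro N
    induction N with
    | zero =>
      intro v p hp hle
      exact absurd hp.length_lt (by omega)
    | succ N ih =>
      intro v p hp hle
      by_cases hlv : v ≠ r ∧ F.degree v = 1
      · exact hleaf v ⟨p⟩ hlv.1 hlv.2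
      · have hvr : v = r ∨ 2 ≤ F.degree v := by
          by_cases hv : v = r
          · exact Or.inl hv
          · right
            have h1 : F.degree v ≠ 1 := fun h => hlv ⟨hv, h⟩
            have := hdeg v; omega
        obtain ⟨u, huv, hgood⟩ := exists_extension hF hp (hdeg v) hvr
        set q : F.Walk u r := Walk.cons huv.symm p with hqdef
        have hxu : x u = 0 := ih u q hgood (by simp [hqdef, Walk.length_cons]; omega)
        -- all neighbors of u other than v vanish
        have hnbr : ∀ w ∈ F.neighborFinset u, w ≠ v → x w = 0 := by
          intro w hw hwv
          have huw : F.Adj u w := (SimpleGraph.mem_neighborFinset _ _ _).mp hw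
          rcases dich hF huw hgood with ⟨q', hq'⟩ | hgood' 
          · exfalso
            apply hwv
            have := congrArg (fun t => Walk.getVert t 1) hq'
            simpa [hqdef, Walk.getVert_cons_succ, Walk.getVert_zero] using this.symm
          · exact ih w (Walk.cons huw.symm q) hgood'
              (by simp [hqdef, Walk.length_cons]; omega)
        have hsum := hrel u
        rw [hxu, mul_zero] at hsum
        have hvmem : v ∈ F.neighborFinset u := (SimpleGraph.mem_neighborFinset _ _ _).mpr huv.symm
        calc x v = ∑ w ∈ F.neighborFinset u, x w :=
              (Finset.sum_eq_single_of_mem v hvmem (fun w hw hwv => hnbr w hw hwv)).symm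
          _ = 0 := hsum
  intro v hv
  exact Z (Fintype.card WT) v (Classical.choice hv).toPath (Walk.toPath _).2 (by omega)

end ForestBound


/-- Forest Bound for the Laplacian spectrum: if `W` is an induced forest of `G`
without isolated vertices, with `l` leaves and `c` connected components, then
every Laplacian eigenvalue `μ` of `G` has multiplicity at most
`|V| - |W| + l - c`. -/
theorem laplacian_mult_forest_bound {V : Type*} [Fintype V] [DecidableEq V]
    (G : SimpleGraph V) [DecidableRel G.Adj] (μ : ℝ)
    (hμ : Module.End.HasEigenvalue (Matrix.toLin' (G.lapMatrix ℝ)) μ)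
    (W : Set V)
    (hforest : (G.induce W).IsAcyclic)
    (hniso : ∀ v ∈ W, (G.neighborSet v ∩ W).Nonempty)
    (l c : ℕ)
    (hl : l = {v | v ∈ W ∧ (G.neighborSet v ∩ W).ncard = 1}.ncard)
    (hc : c = Nat.card (G.induce W).ConnectedComponent) :
    (Module.finrank ℝ
        (Module.End.eigenspace (Matrix.toLin' (G.lapMatrix ℝ)) μ) : ℤ)
      ≤ (Fintype.card V : ℤ) - W.ncard + l - c := by
  classical
  haveI : Fintype ↥W := W.toFinite.fintype
  set F : SimpleGraph ↥W := G.induce W with hFdef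
  haveI hDR : DecidableRel F.Adj := fun a b => decidable_of_iff (G.Adj a.1 b.1) Iff.rfl
  -- degree translation
  have himg : ∀ u : ↥W, Subtype.val '' (F.neighborSet u) = G.neighborSet u.1 ∩ W := by
    intro u
    ext w
    simp only [Set.mem_image, SimpleGraph.mem_neighborSet, Set.mem_inter_iff]
    constructor
    · rintro ⟨w', hw', rfl⟩
      exact ⟨hw', w'.2⟩
    · rintro ⟨hadj, hwW⟩
      exact ⟨⟨w, hwW⟩, hadj, rfl⟩
  have hdegW : ∀ u : ↥W, F.degree u = (G.neighborSet u.1 ∩ W).ncard := by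
    intro u
    rw [← himg u, Set.ncard_image_of_injective _ Subtype.val_injective]
    rw [Set.ncard_eq_toFinset_card', ← SimpleGraph.neighborFinset_def]
    rfl
  have hdegpos : ∀ u : ↥W, 0 < F.degree u := by
    intro u
    rw [hdegW]
    exact (Set.ncard_pos ((G.neighborSet u.1 ∩ W).toFinite)).mpr (hniso u.1 u.2)
  -- choose a leaf in each component
  have hleafex : ∀ C : F.ConnectedComponent,
      ∃ u : ↥W, F.connectedComponentMk u = C ∧ F.degree u = 1 := by
    intro C
    obtain ⟨v₀, rfl⟩ := C.exists_rep
    obtain ⟨u, hru, hdu⟩ := ForestBound.exists_leaf hforest hdegpos v₀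
    exact ⟨u, (SimpleGraph.ConnectedComponent.eq.mpr hru.symm), hdu⟩
  choose leaf hleafC hleafdeg using hleafex
  have hleafinj : Function.Injective leaf := by
    intro C C' h
    rw [← hleafC C, ← hleafC C', h]
  set L : Set V := {v | v ∈ W ∧ (G.neighborSet v ∩ W).ncard = 1} with hLdef
  set R : Set V := Subtype.val '' (Set.range leaf) with hRdef
  have hRL : R ⊆ L := by
    rintro v ⟨u, ⟨C, rfl⟩, rfl⟩
    exact ⟨(leaf C).2, by rw [← hdegW]; exact hleafdeg C⟩
  have hLW : L ⊆ W := fun v hv => hv.1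
  set S : Set V := Wᶜ ∪ (L \ R) with hSdef
  set E := Module.End.eigenspace (Matrix.toLin' (G.lapMatrix ℝ)) μ with hEdef
  -- the zero lemma
  have hinj0 : ∀ x : V → ℝ, x ∈ E → (∀ v ∈ S, x v = 0) → x = 0 := by
    intro x hxE hxS
    have hx0 : ∀ v, v ∉ W → x v = 0 := fun v hv => hxS v (Or.inl hv)
    have heig : ∀ v, (G.degree v : ℝ) * x v - ∑ u ∈ G.neighborFinset v, x u = μ * x v := by
      intro v
      have h1 : Matrix.toLin' (G.lapMatrix ℝ) x = μ • x := Module.End.mem_eigenspace_iff.mp hxE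
      rw [Matrix.toLin'_apply] at h1
      have h2 := congrFun h1 v
      rw [SimpleGraph.lapMatrix_mulVec_apply] at h2
      simpa using h2
    have hsum : ∀ u : ↥W, ∑ w ∈ F.neighborFinset u, x w.1 = ∑ w ∈ G.neighborFinset u.1, x w := by
      intro u
      have h1 : ∑ w ∈ (F.neighborFinset u).image Subtype.val, x w
          = ∑ w ∈ F.neighborFinset u, x w.1 :=
        Finset.sum_image (f := x) (g := Subtype.val) (s := F.neighborFinset u)
          (fun a _ b _ hab => Subtype.val_injective hab)
      rw [← h1]
      apply Finset.sum_subset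
      · intro w hw
        simp only [Finset.mem_image, SimpleGraph.mem_neighborFinset] at hw ⊢
        obtain ⟨w', hw', rfl⟩ := hw
        exact hw'
      · intro w hw hni
        apply hx0
        intro hwW
        apply hni
        simp only [Finset.mem_image, SimpleGraph.mem_neighborFinset] at hw ⊢
        exact ⟨⟨w, hwW⟩, hw, rfl⟩
    have hrelW : ∀ u : ↥W, ∑ w ∈ F.neighborFinset u, x w.1 = ((G.degree u.1 : ℝ) - μ) * x u.1 := by
      intro u
      rw [hsum u]
      have := heig u.1
      ring_nf
      ring_nf at this
      linarith
    have hxW : ∀ u : ↥W, x u.1 = 0 := by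
      intro u
      set C := F.connectedComponentMk u with hCdef
      have hreach : F.Reachable u (leaf C) :=
        SimpleGraph.ConnectedComponent.eq.mp (by rw [hleafC C])
      refine ForestBound.key hforest (fun z : ↥W => x z.1) (fun z => (G.degree z.1 : ℝ) - μ) hrelW hdegpos
        (leaf C) ?_ u hreach
      intro w hwr hwne hwdeg
      apply hxS
      refine Or.inr ⟨⟨w.2, by rw [← hdegW]; exact hwdeg⟩, ?_⟩
      rintro ⟨w', ⟨C', rfl⟩, hval⟩
      have hww' : w = leaf C' := Subtype.val_injective hval.symm
      have : C' = C := by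
        rw [← hleafC C', ← hww']
        rw [hCdef]
        exact SimpleGraph.ConnectedComponent.eq.mpr (hwr.trans hreach.symm)
      exact hwne (by rw [hww', this])
    funext v
    by_cases hv : v ∈ W
    · exact hxW ⟨v, hv⟩
    · exact hx0 v hv
  -- dimension bound
  haveI : Fintype ↥S := S.toFinite.fintype
  have hfin : Module.finrank ℝ E ≤ S.ncard := by
    let Φ : (V → ℝ) →ₗ[ℝ] (↥S → ℝ) := LinearMap.funLeft ℝ ℝ Subtype.val
    have hker : Function.Injective (Φ.comp E.subtype) := by
      apply LinearMap.ker_eq_bot.mp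
      rw [LinearMap.ker_eq_bot']
      intro m hm
      apply Subtype.ext
      refine hinj0 m.1 m.2 (fun v hv => ?_)
      exact congrFun hm ⟨v, hv⟩
    have := LinearMap.finrank_le_finrank_of_injective hker
    rwa [Module.finrank_fintype_fun_eq_card, ← Nat.card_eq_fintype_card,
      Nat.card_coe_set_eq] at this
  -- cardinality computations
  have hRcard : R.ncard = c := by
    rw [hRdef, Set.ncard_image_of_injective _ Subtype.val_injective,
      ← Nat.card_coe_set_eq, Nat.card_range_of_injective hleafinj, hc]
  have hdisj : Disjoint (Wᶜ) (L \ R) :=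
    Disjoint.mono_right (Set.diff_subset.trans hLW) disjoint_compl_left
  have hScard : S.ncard = Wᶜ.ncard + (L.ncard - R.ncard) := by
    rw [hSdef, Set.ncard_union_eq hdisj, Set.ncard_diff hRL]
  have hcompl : W.ncard + Wᶜ.ncard = Fintype.card V := by
    rw [Set.ncard_add_ncard_compl, Nat.card_eq_fintype_card]
  have hcl : c ≤ l := by
    rw [hl, ← hRcard]
    exact Set.ncard_le_ncard hRL L.toFinite
  have hlL : l = L.ncard := hl
  omega
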